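/- For every real x > 0, ∫_0^{π/2} cos ϑ · I_0(x·cos ϑ) dϑ = sinh(x)/x, where I_0(y) = ∑_{m=0}^∞ 1/(m!·Γ(m+1))·(y/2)^{2m}. -/

import Mathlib

open Real MeasureTheory

/-- The modified Bessel function of the first kind of order 0, defined by its series. -/
noncomputable def besselI0 (y : ℝ) : ℝ :=
  ∑' m : ℕ, 1 / (m.factorial * Real.Gamma (m + 1)) * (y / 2) ^ (2 * m)

lemma cos_pow_odd_integral (n : ℕ) :
    ∫ θ in (0:ℝ)..(π/2), Real.cos θ ^ (2 * n + 1)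
      = (2:ℝ) ^ (2 * n) * (n.factorial : ℝ) ^ 2 / ((2 * n + 1).factorial : ℝ) := by
  induction n with
  | zero => simp
  | succ n ih =>
      have hexp : 2 * (n + 1) + 1 = (2 * n + 1) + 2 := by ring
      rw [hexp, integral_cos_pow (a := 0) (b := π/2) (n := 2*n+1), ih]
      have hfac : ((2 * (n + 1) + 1).factorial : ℝ)
          = (2 * n + 3) * ((2 * n + 2) * ((2 * n + 1).factorial : ℝ)) := by
        have : 2 * (n + 1) + 1 = (2 * n + 2) + 1 := by ring
        rw [this, Nat.factorial_succ]
        have : 2 * n + 2 = (2 * n + 1) + 1 := by ring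
        rw [this, Nat.factorial_succ]
        push_cast; ring
      rw [hexp] at hfac
      have hpos1 : ((2 * n + 1).factorial : ℝ) ≠ 0 := by positivity
      rw [hfac]
      push_cast [Nat.factorial_succ]
      field_simp
      simp only [Real.cos_pi_div_two, Real.sin_zero]
      ring

theorem integral_cos_besselI0 (x : ℝ) (hx : 0 < x) :
    ∫ ϑ in (0:ℝ)..(π / 2), Real.cos ϑ * besselI0 (x * Real.cos ϑ)
      = Real.sinh x / x := by
  have hπ : (0:ℝ) ≤ π / 2 := by positivity
  set f : ℕ → ℝ → ℝ := fun m θ =>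
    (1 / ((m.factorial : ℝ)) ^ 2 * (x / 2) ^ (2 * m)) * Real.cos θ ^ (2 * m + 1) with hfdef
  have hpt : ∀ θ : ℝ, Real.cos θ * besselI0 (x * Real.cos θ) = ∑' m, f m θ := by
    intro θ
    rw [besselI0, ← tsum_mul_left]
    congr 1; funext m
    rw [Real.Gamma_nat_eq_factorial]
    have h1 : (x * Real.cos θ / 2) ^ (2 * m)
        = (x / 2) ^ (2 * m) * Real.cos θ ^ (2 * m) := by
      rw [← mul_pow]; ring_nf
    rw [h1]
    simp only [hfdef]
    ring
  have hcont : ∀ m : ℕ, Continuous (f m) := by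
    intro m; fun_prop
  have hint : ∀ m : ℕ, IntegrableOn (f m) (Set.Ioc 0 (π/2)) volume := by
    intro m; exact (hcont m).integrableOn_Ioc
  -- the bound
  set C : ℕ → ℝ := fun m => (x ^ 2 / 4) ^ m / (m.factorial : ℝ) * (π / 2) with hCdef
  have hCsum : Summable C := (Real.summable_pow_div_factorial (x ^ 2 / 4)).mul_right _
  have hnorm_le : ∀ m : ℕ, (∫ θ in Set.Ioc (0:ℝ) (π/2), ‖f m θ‖) ≤ C m := by
    intro m
    have hvol : volume (Set.Ioc (0:ℝ) (π/2)) < ⊤ := by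
      rw [Real.volume_Ioc]; exact ENNReal.ofReal_lt_top
    have hb : ∀ θ ∈ Set.Ioc (0:ℝ) (π/2), ‖(fun t => ‖f m t‖) θ‖ ≤ (x ^ 2 / 4) ^ m / (m.factorial : ℝ) := by
      intro θ _
      rw [norm_norm, hfdef]
      have h1 : ‖(1 / ((m.factorial : ℝ)) ^ 2 * (x / 2) ^ (2 * m)) * Real.cos θ ^ (2 * m + 1)‖
          = (1 / ((m.factorial : ℝ)) ^ 2 * (x / 2) ^ (2 * m)) * |Real.cos θ| ^ (2 * m + 1) := by
        rw [norm_mul, Real.norm_eq_abs, Real.norm_eq_abs, abs_pow]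
        congr 1
        rw [abs_of_nonneg]
        positivity
      rw [h1]
      have h2 : |Real.cos θ| ^ (2 * m + 1) ≤ 1 :=
        pow_le_one₀ (abs_nonneg _) (Real.abs_cos_le_one θ)
      have h3 : (1 / ((m.factorial : ℝ)) ^ 2 * (x / 2) ^ (2 * m)) * |Real.cos θ| ^ (2 * m + 1)
          ≤ (1 / ((m.factorial : ℝ)) ^ 2 * (x / 2) ^ (2 * m)) * 1 :=
        mul_le_mul_of_nonneg_left h2 (by positivity)
      refine h3.trans ?_
      rw [mul_one]
      have h4 : (x / 2) ^ (2 * m) = (x ^ 2 / 4) ^ m := by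
        rw [pow_mul]; ring_nf
      rw [h4, one_div, inv_mul_eq_div]
      have hm1 : (1:ℝ) ≤ (m.factorial : ℝ) := by exact_mod_cast m.factorial_pos
      gcongr
      nlinarith
    have := norm_setIntegral_le_of_norm_le_const (f := fun t => ‖f m t‖) hvol hb
    rw [Real.norm_eq_abs, abs_of_nonneg (integral_nonneg fun t => norm_nonneg _)] at this
    refine this.trans ?_
    rw [hCdef]
    simp only [Measure.real, Real.volume_Ioc, sub_zero, ENNReal.toReal_ofReal hπ, le_refl]
  have hsum : Summable fun m => ∫ θ in Set.Ioc (0:ℝ) (π/2), ‖f m θ‖ :=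
    Summable.of_nonneg_of_le (fun m => integral_nonneg fun t => norm_nonneg _) hnorm_le hCsum
  have hswap := MeasureTheory.integral_tsum_of_summable_integral_norm hint hsum
  rw [intervalIntegral.integral_of_le hπ]
  simp only [hpt]
  rw [← hswap]
  -- compute each term
  have hterm : ∀ m : ℕ, (∫ θ in Set.Ioc (0:ℝ) (π/2), f m θ) = x ^ (2 * m) / ((2 * m + 1).factorial : ℝ) := by
    intro m
    rw [← intervalIntegral.integral_of_le hπ]
    rw [hfdef]
    simp only
    rw [intervalIntegral.integral_const_mul, cos_pow_odd_integral]
    have hfm : ((m.factorial : ℝ)) ≠ 0 := by positivity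
    have hfm2 : ((2 * m + 1).factorial : ℝ) ≠ 0 := by positivity
    have h4 : (x / 2) ^ (2 * m) * (2:ℝ) ^ (2 * m) = x ^ (2 * m) := by
      rw [← mul_pow]; ring_nf
    field_simp
    nlinarith [h4, sq_nonneg ((m.factorial : ℝ))]
  simp only [hterm]
  -- sum the series
  have hs := Real.hasSum_sinh x
  have hx' : x ≠ 0 := ne_of_gt hx
  have hs2 : HasSum (fun n : ℕ => x ^ (2 * n) / ((2 * n + 1).factorial : ℝ)) (Real.sinh x / x) := by
    have := hs.div_const x
    convert this using 2 with n
    case e'_3 => rfl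
    rw [pow_succ]
    field_simp
  exact hs2.tsum_eq
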